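/- Let (θ_n) be a sequence of systems on (G, X) such that Δ(m, θ_n) → 0 as n → ∞ for every probability measure m on G × X with m ≺ λ ⊗ κ, and let φ be an absolutely continuous system on (G, X). Then Δ(m, φ⊛θ_n) → 0 as n → ∞ for every probability measure m on G × X with m ≺ λ ⊗ κ. -/

import Mathlib

open MeasureTheory Filter Topology

/-- Total variation norm `‖μ − ν‖` of the difference of two finite measures. -/
noncomputable def tv {α : Type*} [MeasurableSpace α] (μ ν : Measure α) : ℝ :=
  ((μ - ν) Set.univ + (ν - μ) Set.univ).toReal

/-- Pushforward `gμ` of a measure on `G` under the left translation `h ↦ g * h`. -/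
noncomputable def ltrans {G : Type*} [MeasurableSpace G] [Mul G] (g : G) (μ : Measure G) :
    Measure G :=
  μ.map (fun h => g * h)

/-- Convolution `α * β` of measures on `G`: the pushforward of `α ⊗ β` under
`(g, h) ↦ g * h`. -/
noncomputable def mconv {G : Type*} [MeasurableSpace G] [Mul G] (μ ν : Measure G) : Measure G :=
  (μ.prod ν).map (fun p : G × G => p.1 * p.2)

/-- `convPow θ k = θ^{*k}`, the `k`-th convolution power of `θ` (with `θ^{*0} = δ_1`). -/
noncomputable def convPow {G : Type*} [MeasurableSpace G] [Monoid G] (θ : Measure G) :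
    ℕ → Measure G
  | 0 => Measure.dirac 1
  | (k + 1) => mconv θ (convPow θ k)

/-- Mean discrepancy `Δ(m, θ) = ∫_G ‖gθ − θ‖ dm(g)`. -/
noncomputable def disc {G : Type*} [MeasurableSpace G] [Mul G] (m θ : Measure G) : ℝ :=
  ∫ g, tv (ltrans g θ) θ ∂m

/-- A system on `(G, X)`: a Markov kernel `x ↦ θ^x` from `X` to `G`, i.e. a measurable
family of Borel probability measures on `G`. -/
def IsSystem {G X : Type*} [MeasurableSpace G] [MeasurableSpace X] (θ : X → Measure G) : Prop :=
  Measurable θ ∧ ∀ x, IsProbabilityMeasure (θ x)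

/-- Discrepancy function of a system: `D_θ(g, x) = ‖g θ^{g⁻¹·x} − θ^x‖`. -/
noncomputable def Dsys {G X : Type*} [MeasurableSpace G] [Group G] [MulAction G X]
    (θ : X → Measure G) (p : G × X) : ℝ :=
  tv (ltrans p.1 (θ (p.1⁻¹ • p.2))) (θ p.2)

/-- Convolution of systems: `(θ⊛φ)^x = ∫_G g φ^{g⁻¹·x} dθ^x(g)`. -/
noncomputable def sconv {G X : Type*} [MeasurableSpace G] [Group G] [MulAction G X]
    (θ φ : X → Measure G) : X → Measure G :=
  fun x => (θ x).bind fun g => ltrans g (φ (g⁻¹ • x))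

/-- `k`-fold convolution power `θ^{⊛k}` of a system (with `θ^{⊛0} = δ_1` fibrewise). -/
noncomputable def sconvPow {G X : Type*} [MeasurableSpace G] [Group G] [MulAction G X]
    (θ : X → Measure G) : ℕ → X → Measure G
  | 0 => fun _ => Measure.dirac 1
  | (k + 1) => sconv θ (sconvPow θ k)

/-- Mean discrepancy `Δ(m, θ) = ∫_{G×X} D_θ dm` of a system against a measure on `G × X`. -/
noncomputable def sdisc {G X : Type*} [MeasurableSpace G] [MeasurableSpace X] [Group G]
    [MulAction G X] (m : Measure (G × X)) (θ : X → Measure G) : ℝ :=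
  ∫ p, Dsys θ p ∂m

/-- The measure `mQ_φ` on `G × X`:
`mQ_φ(A) = ∫_{G×X} ∫_G 1_A(g h, x) dφ^{g⁻¹·x}(h) dm(g, x)`. -/
noncomputable def mQ {G X : Type*} [MeasurableSpace G] [MeasurableSpace X] [Group G]
    [MulAction G X] (m : Measure (G × X)) (φ : X → Measure G) : Measure (G × X) :=
  m.bind fun p => (φ (p.1⁻¹ • p.2)).map fun h => (p.1 * h, p.2)

/-- The measure `m̄Q_φ` on `G × X`:
`m̄Q_φ(A) = ∫_{G×X} ∫_G 1_A(h, x) dφ^{x}(h) dm(g, x)`. -/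
noncomputable def mbarQ {G X : Type*} [MeasurableSpace G] [MeasurableSpace X] [Group G]
    (m : Measure (G × X)) (φ : X → Measure G) : Measure (G × X) :=
  m.bind fun p => (φ p.2).map fun h => (h, p.2)

section TV
variable {α : Type*} [MeasurableSpace α] {μ ν ρ : Measure α}

lemma tv_comm (μ ν : Measure α) : tv μ ν = tv ν μ := by
  simp [tv, add_comm]

lemma tv_nonneg : 0 ≤ tv μ ν := ENNReal.toReal_nonneg

lemma sub_univ_ne_top [IsFiniteMeasure μ] : (μ - ν) Set.univ ≠ ⊤ :=
  (measure_ne_top (μ - ν) _)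

lemma sub_apply_of_hahn [IsFiniteMeasure μ] [IsFiniteMeasure ν] {s t : Set α}
    (hs : MeasurableSet s) (ht : MeasurableSet t) (hts : t ⊆ s)
    (h : ∀ u, MeasurableSet u → u ⊆ s → ν u ≤ μ u) : (μ - ν) t = μ t - ν t := by
  have hle : ν.restrict s ≤ μ.restrict s := by
    refine Measure.le_iff.2 fun u hu => ?_
    rw [Measure.restrict_apply hu, Measure.restrict_apply hu]
    exact h _ (hu.inter hs) Set.inter_subset_right
  have h1 : (μ - ν) (t ∩ s) = (μ - ν) t := by rw [Set.inter_eq_self_of_subset_left hts]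
  calc (μ - ν) t = (μ - ν).restrict s t := by
        rw [Measure.restrict_apply ht, h1]
    _ = (μ.restrict s - ν.restrict s) t := by
        rw [Measure.restrict_sub_eq_restrict_sub_restrict hs]
    _ = μ.restrict s t - ν.restrict s t := Measure.sub_apply ht hle
    _ = μ t - ν t := by
        rw [Measure.restrict_apply ht, Measure.restrict_apply ht,
          Set.inter_eq_self_of_subset_left hts]

/-- Hahn decomposition packaged for `Measure.sub`. -/
lemma exists_hahn (μ ν : Measure α) [IsFiniteMeasure μ] [IsFiniteMeasure ν] :
    ∃ s : Set α, MeasurableSet s ∧ ν s ≤ μ s ∧ μ sᶜ ≤ ν sᶜ ∧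
      (μ - ν) Set.univ = μ s - ν s ∧ (ν - μ) Set.univ = ν sᶜ - μ sᶜ := by
  obtain ⟨s, hs, h1, h2⟩ := hahn_decomposition (μ := μ) (ν := ν)
  have hsub1 : (μ - ν) s = μ s - ν s := sub_apply_of_hahn hs hs subset_rfl h1
  have hsub2 : (ν - μ) sᶜ = ν sᶜ - μ sᶜ := sub_apply_of_hahn hs.compl hs.compl subset_rfl h2
  have hz1 : (μ - ν) sᶜ = 0 := by
    refine Measure.sub_apply_eq_zero_of_restrict_le_restrict ?_ hs.compl
    refine Measure.le_iff.2 fun u hu => ?_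
    rw [Measure.restrict_apply hu, Measure.restrict_apply hu]
    exact h2 _ (hu.inter hs.compl) Set.inter_subset_right
  have hz2 : (ν - μ) s = 0 := by
    refine Measure.sub_apply_eq_zero_of_restrict_le_restrict ?_ hs
    refine Measure.le_iff.2 fun u hu => ?_
    rw [Measure.restrict_apply hu, Measure.restrict_apply hu]
    exact h1 _ (hu.inter hs) Set.inter_subset_right
  refine ⟨s, hs, h1 s hs subset_rfl, h2 sᶜ hs.compl subset_rfl, ?_, ?_⟩
  · rw [← measure_add_measure_compl (μ := μ - ν) hs, hsub1, hz1, add_zero]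
  · rw [← measure_add_measure_compl (μ := ν - μ) hs, hsub2, hz2, zero_add]

lemma le_sub_add' (μ ν : Measure α) [IsFiniteMeasure μ] [IsFiniteMeasure ν] :
    μ ≤ (μ - ν) + ν := by
  obtain ⟨s, hs, h1, h2⟩ := hahn_decomposition (μ := μ) (ν := ν)
  refine Measure.le_iff.2 fun t ht => ?_
  have key : (μ - ν) (t ∩ s) = μ (t ∩ s) - ν (t ∩ s) :=
    sub_apply_of_hahn hs (ht.inter hs) Set.inter_subset_right h1
  calc μ t = μ (t ∩ s) + μ (t \ s) := (measure_inter_add_diff t hs).symm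
    _ ≤ ((μ - ν) (t ∩ s) + ν (t ∩ s)) + ν (t \ s) := by
        refine add_le_add ?_ (h2 _ (ht.diff hs) (Set.diff_subset_iff.2 (by simp)))
        rw [key]
        exact le_tsub_add
    _ ≤ (μ - ν) t + (ν (t ∩ s) + ν (t \ s)) := by
        rw [add_assoc]
        exact add_le_add (measure_mono Set.inter_subset_left) le_rfl
    _ = (μ - ν) t + ν t := by rw [measure_inter_add_diff t hs]

lemma meas_diff_le_sub_univ [IsFiniteMeasure μ] [IsFiniteMeasure ν] {t : Set α}
    (ht : MeasurableSet t) : μ t - ν t ≤ (μ - ν) Set.univ := by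
  have := Measure.le_iff.1 (le_sub_add' μ ν) t ht
  exact le_trans (tsub_le_iff_right.2 this) (measure_mono (Set.subset_univ t))

lemma toReal_diff_le_sub_univ [IsFiniteMeasure μ] [IsFiniteMeasure ν] {t : Set α}
    (ht : MeasurableSet t) : (μ t).toReal - (ν t).toReal ≤ ((μ - ν) Set.univ).toReal := by
  rw [sub_le_iff_le_add, ← ENNReal.toReal_add sub_univ_ne_top (measure_ne_top ν t)]
  refine ENNReal.toReal_le_toReal (measure_ne_top μ t) ?_ |>.2 ?_
  · exact ENNReal.add_ne_top.2 ⟨sub_univ_ne_top, measure_ne_top ν t⟩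
  · exact le_trans (Measure.le_iff.1 (le_sub_add' μ ν) t ht)
      (add_le_add (measure_mono (Set.subset_univ t)) le_rfl)

lemma tv_eq_add [IsFiniteMeasure μ] [IsFiniteMeasure ν] :
    tv μ ν = ((μ - ν) Set.univ).toReal + ((ν - μ) Set.univ).toReal := by
  rw [tv, ENNReal.toReal_add sub_univ_ne_top sub_univ_ne_top]

lemma tv_triangle (μ ν ρ : Measure α) [IsFiniteMeasure μ] [IsFiniteMeasure ν]
    [IsFiniteMeasure ρ] : tv μ ρ ≤ tv μ ν + tv ν ρ := by
  have key : ∀ (a b c : Measure α), IsFiniteMeasure a → IsFiniteMeasure b → IsFiniteMeasure c →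
      ((a - c) Set.univ).toReal ≤ ((a - b) Set.univ).toReal + ((b - c) Set.univ).toReal := by
    intro a b c ha hb hc
    have hle : a - c ≤ (a - b) + (b - c) := by
      refine Measure.sub_le_of_le_add ?_
      calc a ≤ (a - b) + b := le_sub_add' a b
        _ ≤ (a - b) + ((b - c) + c) := add_le_add le_rfl (le_sub_add' b c)
        _ = (a - b) + (b - c) + c := by rw [add_assoc]
    rw [← ENNReal.toReal_add (measure_ne_top _ _) (measure_ne_top _ _)]
    refine ENNReal.toReal_le_toReal (measure_ne_top _ _) ?_ |>.2 ?_
    · exact ENNReal.add_ne_top.2 ⟨measure_ne_top _ _, measure_ne_top _ _⟩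
    · exact le_trans (Measure.le_iff.1 hle _ MeasurableSet.univ) le_rfl
  rw [tv_eq_add, tv_eq_add, tv_eq_add]
  have h1 := key μ ν ρ inferInstance inferInstance inferInstance
  have h2 := key ρ ν μ inferInstance inferInstance inferInstance
  linarith

lemma tv_le_two [IsProbabilityMeasure μ] [IsProbabilityMeasure ν] : tv μ ν ≤ 2 := by
  rw [tv_eq_add]
  have h1 : ((μ - ν) Set.univ).toReal ≤ 1 := by
    have h := Measure.le_iff.1 (Measure.sub_le (μ := μ) (ν := ν)) Set.univ MeasurableSet.univ
    have := (ENNReal.toReal_le_toReal (measure_ne_top _ _) (measure_ne_top μ _)).2 h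
    simpa using this
  have h2 : ((ν - μ) Set.univ).toReal ≤ 1 := by
    have h := Measure.le_iff.1 (Measure.sub_le (μ := ν) (ν := μ)) Set.univ MeasurableSet.univ
    have := (ENNReal.toReal_le_toReal (measure_ne_top _ _) (measure_ne_top ν _)).2 h
    simpa using this
  linarith

end TV

section TVMeas
open MeasurableSpace symmDiff
variable {α : Type*} [MeasurableSpace α]

lemma sub_univ_eq_iSup [CountablyGenerated α] (μ ν : Measure α) [IsFiniteMeasure μ]
    [IsFiniteMeasure ν] :
    (μ - ν) Set.univ
      = ⨆ t : MeasureTheory.generateSetAlgebra (countableGeneratingSet α), (μ ↑t - ν ↑t) := by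
  set 𝒜 := MeasureTheory.generateSetAlgebra (countableGeneratingSet α) with h𝒜
  have hgen : ‹MeasurableSpace α› = generateFrom 𝒜 := by
    rw [h𝒜, MeasureTheory.generateFrom_generateSetAlgebra_eq,
      generateFrom_countableGeneratingSet]
  have hmeas : ∀ t ∈ 𝒜, MeasurableSet t := fun t ht => hgen ▸ measurableSet_generateFrom ht
  refine le_antisymm ?_ ?_
  swap
  · exact iSup_le fun t => meas_diff_le_sub_univ (hmeas _ t.2)
  obtain ⟨s, hs, -, -, hval, -⟩ := exists_hahn μ ν
  rw [hval]
  refine ENNReal.le_of_forall_pos_le_add fun ε hε _ => ?_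
  have hdense : (μ + ν).MeasureDense 𝒜 :=
    Measure.MeasureDense.of_generateFrom_isSetAlgebra_finite (μ + ν)
      MeasureTheory.isSetAlgebra_generateSetAlgebra hgen
  obtain ⟨t, ht𝒜, hlt⟩ := hdense.approx s hs (measure_ne_top _ _) ((ε : ℝ) / 2)
    (by positivity)
  have hμ : μ (s ∆ t) ≤ ENNReal.ofReal ((ε : ℝ) / 2) := le_of_lt (by
      calc μ (s ∆ t) ≤ (μ + ν) (s ∆ t) := by
            simp only [Measure.add_apply]; exact le_add_right le_rfl
        _ < ENNReal.ofReal ((ε : ℝ) / 2) := hlt)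
  have hν : ν (s ∆ t) ≤ ENNReal.ofReal ((ε : ℝ) / 2) := le_of_lt (by
      calc ν (s ∆ t) ≤ (μ + ν) (s ∆ t) := by
            simp only [Measure.add_apply]; exact le_add_left le_rfl
        _ < ENNReal.ofReal ((ε : ℝ) / 2) := hlt)
  have h1 : μ s ≤ μ t + μ (s ∆ t) := by
    refine le_trans (measure_mono ?_) (measure_union_le _ _)
    intro x hx
    by_cases hxt : x ∈ t
    · exact Or.inl hxt
    · exact Or.inr (Or.inl ⟨hx, hxt⟩)
  have h2 : ν t ≤ ν s + ν (s ∆ t) := by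
    refine le_trans (measure_mono ?_) (measure_union_le _ _)
    intro x hx
    by_cases hxs : x ∈ s
    · exact Or.inl hxs
    · exact Or.inr (Or.inr ⟨hx, hxs⟩)
  have key : μ s - ν s ≤ (μ t - ν t) + (μ (s ∆ t) + ν (s ∆ t)) := by
    rw [tsub_le_iff_right]
    calc μ s ≤ μ t + μ (s ∆ t) := h1
      _ ≤ ((μ t - ν t) + ν t) + μ (s ∆ t) := add_le_add le_tsub_add le_rfl
      _ ≤ ((μ t - ν t) + (ν s + ν (s ∆ t))) + μ (s ∆ t) := add_le_add (add_le_add le_rfl h2) le_rfl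
      _ = (μ t - ν t) + (μ (s ∆ t) + ν (s ∆ t)) + ν s := by ring
  calc μ s - ν s ≤ (μ t - ν t) + (μ (s ∆ t) + ν (s ∆ t)) := key
    _ ≤ (⨆ u : 𝒜, (μ ↑u - ν ↑u))
          + (ENNReal.ofReal ((ε : ℝ) / 2) + ENNReal.ofReal ((ε : ℝ) / 2)) :=
        add_le_add (le_iSup (fun u : 𝒜 => (μ ↑u - ν ↑u)) ⟨t, ht𝒜⟩) (add_le_add hμ hν)
    _ ≤ (⨆ u : 𝒜, (μ ↑u - ν ↑u)) + ε := by
        gcongr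
        rw [← ENNReal.ofReal_add (by positivity) (by positivity)]
        rw [show (ε : ℝ) / 2 + (ε : ℝ) / 2 = (ε : ℝ) by ring, ENNReal.ofReal_coe_nnreal]

lemma measurable_tv {β : Type*} [MeasurableSpace β] [CountablyGenerated α]
    {μ ν : β → Measure α} (hμ : Measurable μ) (hν : Measurable ν)
    (hμf : ∀ b, IsFiniteMeasure (μ b)) (hνf : ∀ b, IsFiniteMeasure (ν b)) :
    Measurable fun b => tv (μ b) (ν b) := by
  set 𝒜 := MeasureTheory.generateSetAlgebra (countableGeneratingSet α) with h𝒜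
  have hgen : ‹MeasurableSpace α› = generateFrom 𝒜 := by
    rw [h𝒜, MeasureTheory.generateFrom_generateSetAlgebra_eq,
      generateFrom_countableGeneratingSet]
  have hmeas : ∀ t ∈ 𝒜, MeasurableSet t := fun t ht => hgen ▸ measurableSet_generateFrom ht
  have hcnt : 𝒜.Countable :=
    MeasureTheory.countable_generateSetAlgebra (countable_countableGeneratingSet)
  haveI : Countable 𝒜 := hcnt.to_subtype
  have hsup : ∀ (ρ σ : β → Measure α), Measurable ρ → Measurable σ →
      (∀ b, IsFiniteMeasure (ρ b)) → (∀ b, IsFiniteMeasure (σ b)) →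
      Measurable fun b => (ρ b - σ b) Set.univ := by
    intro ρ σ hρ hσ hρf hσf
    have : (fun b => (ρ b - σ b) Set.univ) = fun b => ⨆ t : 𝒜, (ρ b ↑t - σ b ↑t) := by
      funext b
      haveI := hρf b; haveI := hσf b
      exact sub_univ_eq_iSup (ρ b) (σ b)
    rw [this]
    exact Measurable.iSup fun t =>
      ((Measure.measurable_coe (hmeas _ t.2)).comp hρ).sub
        ((Measure.measurable_coe (hmeas _ t.2)).comp hσ)
  exact ENNReal.measurable_toReal.comp ((hsup μ ν hμ hν hμf hνf).add (hsup ν μ hν hμ hνf hμf))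

end TVMeas

section Bind
open MeasurableSpace
variable {α β : Type*} [MeasurableSpace α] [MeasurableSpace β]

lemma integrable_of_bounded {μ : Measure α} [IsFiniteMeasure μ] {f : α → ℝ} {C : ℝ}
    (hm : AEStronglyMeasurable f μ) (h : ∀ x, ‖f x‖ ≤ C) : Integrable f μ :=
  Integrable.mono' (integrable_const C) hm (Filter.Eventually.of_forall h)

lemma isProbabilityMeasure_bind {μ : Measure α} [IsProbabilityMeasure μ] {f : α → Measure β}
    (hf : Measurable f) (hfp : ∀ a, IsProbabilityMeasure (f a)) :
    IsProbabilityMeasure (μ.bind f) := by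
  constructor
  rw [Measure.bind_apply MeasurableSet.univ hf.aemeasurable]
  simp [fun a => (hfp a).measure_univ]

lemma bind_apply_toReal {μ : Measure α} [IsProbabilityMeasure μ] {f : α → Measure β}
    (hf : Measurable f) (hfp : ∀ a, IsProbabilityMeasure (f a)) {t : Set β}
    (ht : MeasurableSet t) : ((μ.bind f) t).toReal = ∫ a, ((f a) t).toReal ∂μ := by
  rw [Measure.bind_apply ht hf.aemeasurable]
  refine (integral_toReal (((Measure.measurable_coe ht).comp hf).aemeasurable) ?_).symm
  refine Filter.Eventually.of_forall fun a => ?_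
  haveI := hfp a
  exact lt_of_le_of_lt prob_le_one (by simp)

lemma tv_bind_le [CountablyGenerated β] {μ : Measure α} [IsProbabilityMeasure μ]
    {f g : α → Measure β} (hf : Measurable f) (hg : Measurable g)
    (hfp : ∀ a, IsProbabilityMeasure (f a)) (hgp : ∀ a, IsProbabilityMeasure (g a)) :
    tv (μ.bind f) (μ.bind g) ≤ ∫ a, tv (f a) (g a) ∂μ := by
  haveI hM : IsProbabilityMeasure (μ.bind f) := isProbabilityMeasure_bind hf hfp
  haveI hN : IsProbabilityMeasure (μ.bind g) := isProbabilityMeasure_bind hg hgp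
  obtain ⟨s, hs, hle1, hle2, hv1, hv2⟩ := exists_hahn (μ.bind f) (μ.bind g)
  have htv : tv (μ.bind f) (μ.bind g)
      = (((μ.bind f) s).toReal - ((μ.bind g) s).toReal)
        + (((μ.bind g) sᶜ).toReal - ((μ.bind f) sᶜ).toReal) := by
    rw [tv_eq_add, hv1, hv2, ENNReal.toReal_sub_of_le hle1 (measure_ne_top _ _),
      ENNReal.toReal_sub_of_le hle2 (measure_ne_top _ _)]
  have e1 := bind_apply_toReal (μ := μ) hf hfp hs
  have e2 := bind_apply_toReal (μ := μ) hg hgp hs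
  have e3 := bind_apply_toReal (μ := μ) hg hgp hs.compl
  have e4 := bind_apply_toReal (μ := μ) hf hfp hs.compl
  have meas : ∀ (h : α → Measure β), Measurable h → ∀ t : Set β, MeasurableSet t →
      Measurable fun a => ((h a) t).toReal := fun h hh t ht =>
    ENNReal.measurable_toReal.comp ((Measure.measurable_coe ht).comp hh)
  have bdd : ∀ (h : α → Measure β) (hp : ∀ a, IsProbabilityMeasure (h a)) (t : Set β) (a : α),
      ‖((h a) t).toReal‖ ≤ 1 := by
    intro h hp t a
    rw [Real.norm_eq_abs, abs_of_nonneg ENNReal.toReal_nonneg]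
    haveI := hp a
    exact ENNReal.toReal_le_of_le_ofReal zero_le_one (by simpa using prob_le_one)
  have int1 : Integrable (fun a => ((f a) s).toReal) μ :=
    integrable_of_bounded ((meas f hf s hs).aestronglyMeasurable) (bdd f hfp s)
  have int2 : Integrable (fun a => ((g a) s).toReal) μ :=
    integrable_of_bounded ((meas g hg s hs).aestronglyMeasurable) (bdd g hgp s)
  have int3 : Integrable (fun a => ((g a) sᶜ).toReal) μ :=
    integrable_of_bounded ((meas g hg sᶜ hs.compl).aestronglyMeasurable) (bdd g hgp sᶜ)
  have int4 : Integrable (fun a => ((f a) sᶜ).toReal) μ :=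
    integrable_of_bounded ((meas f hf sᶜ hs.compl).aestronglyMeasurable) (bdd f hfp sᶜ)
  rw [htv, e1, e2, e3, e4]
  rw [← integral_sub int1 int2, ← integral_sub int3 int4]
  have hsum := integral_add (μ := μ) (int1.sub int2) (int3.sub int4)
  simp only [Pi.add_apply, Pi.sub_apply] at hsum
  rw [← hsum]
  refine integral_mono ((int1.sub int2).add (int3.sub int4)) ?_ ?_
  · refine integrable_of_bounded ?_ (C := 2) ?_
    · exact (measurable_tv hf hg (fun a => haveI := hfp a; inferInstance)
        (fun a => haveI := hgp a; inferInstance)).aestronglyMeasurable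
    · intro a
      haveI := hfp a; haveI := hgp a
      rw [Real.norm_eq_abs, abs_of_nonneg tv_nonneg]
      exact tv_le_two
  · intro a
    haveI := hfp a; haveI := hgp a
    have h1 : ((f a) s).toReal - ((g a) s).toReal ≤ ((f a - g a) Set.univ).toReal :=
      toReal_diff_le_sub_univ hs
    have h2 : ((g a) sᶜ).toReal - ((f a) sᶜ).toReal ≤ ((g a - f a) Set.univ).toReal :=
      toReal_diff_le_sub_univ hs.compl
    have := tv_eq_add (μ := f a) (ν := g a)
    dsimp only
    linarith

lemma tv_bind_le_const [CountablyGenerated β] {μ : Measure α} [IsProbabilityMeasure μ]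
    {f : α → Measure β} {ν : Measure β} (hf : Measurable f)
    (hfp : ∀ a, IsProbabilityMeasure (f a)) [IsProbabilityMeasure ν] :
    tv (μ.bind f) ν ≤ ∫ a, tv (f a) ν ∂μ := by
  have hbc : μ.bind (fun _ => ν) = ν := by
    rw [Measure.bind_const, measure_univ, one_smul]
  calc tv (μ.bind f) ν = tv (μ.bind f) (μ.bind fun _ => ν) := by rw [hbc]
    _ ≤ ∫ a, tv (f a) ν ∂μ :=
        tv_bind_le hf measurable_const hfp (fun _ => inferInstance)

end Bind

section GX
set_option linter.unusedSectionVars false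
open MeasurableSpace ProbabilityTheory
variable {G X β γ : Type*} [MeasurableSpace G] [MeasurableSpace X] [MeasurableSpace β]
  [MeasurableSpace γ]

/-- Parametrized pushforward of a measurable family of probability measures is measurable. -/
lemma measurable_map_param {ρ : β → Measure G} (hρ : Measurable ρ)
    (hρp : ∀ b, IsProbabilityMeasure (ρ b)) {f : β × G → γ} (hf : Measurable f) :
    Measurable fun b => (ρ b).map (fun h => f (b, h)) := by
  refine Measure.measurable_of_measurable_coe _ fun s hs => ?_
  have heq : ∀ b, (ρ b).map (fun h => f (b, h)) s = ρ b (Prod.mk b ⁻¹' (f ⁻¹' s)) := by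
    intro b
    rw [Measure.map_apply (show Measurable fun h => f (b, h) from
      hf.comp measurable_prodMk_left) hs]
    rfl
  simp_rw [heq]
  let κ : Kernel β G := ⟨ρ, hρ⟩
  haveI : IsMarkovKernel κ := ⟨hρp⟩
  exact Kernel.measurable_kernel_prodMk_left (κ := κ) (hf hs)

variable [Group G] [MulAction G X] [MeasurableSMul₂ G X] [MeasurableMul₂ G] [MeasurableInv G]

lemma isProbabilityMeasure_ltrans {μ : Measure G} [IsProbabilityMeasure μ] (g : G) :
    IsProbabilityMeasure (ltrans g μ) :=
  Measure.isProbabilityMeasure_map (measurable_const_mul g).aemeasurable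

lemma measurable_ltrans_param {θ : X → Measure G} (hθ : Measurable θ)
    (hθp : ∀ x, IsProbabilityMeasure (θ x)) :
    Measurable fun p : G × X => ltrans p.1 (θ (p.1⁻¹ • p.2)) := by
  have hρ : Measurable fun p : G × X => θ (p.1⁻¹ • p.2) :=
    hθ.comp (measurable_fst.inv.smul measurable_snd)
  exact measurable_map_param (γ := G) hρ (fun p => hθp _)
    (f := fun q : (G × X) × G => q.1.1 * q.2) (measurable_fst.fst.mul measurable_snd)

lemma measurable_dsys [CountablyGenerated G] {θ : X → Measure G} (hθ : IsSystem θ) :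
    Measurable (Dsys θ) := by
  refine measurable_tv (measurable_ltrans_param hθ.1 hθ.2) (hθ.1.comp measurable_snd)
    (fun p => ?_) (fun p => ?_)
  · haveI := hθ.2 (p.1⁻¹ • p.2)
    haveI := isProbabilityMeasure_ltrans (μ := θ (p.1⁻¹ • p.2)) p.1
    infer_instance
  · haveI := hθ.2 p.2; infer_instance

lemma dsys_nonneg {θ : X → Measure G} (p : G × X) : 0 ≤ Dsys θ p := tv_nonneg

lemma dsys_le_two {θ : X → Measure G} (hθp : ∀ x, IsProbabilityMeasure (θ x)) (p : G × X) :
    Dsys θ p ≤ 2 := by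
  haveI := hθp (p.1⁻¹ • p.2); haveI := hθp p.2
  haveI := isProbabilityMeasure_ltrans (μ := θ (p.1⁻¹ • p.2)) p.1
  exact tv_le_two

lemma measurable_bindF {ψ : X → Measure G} (hψ : IsSystem ψ) (x : X) :
    Measurable fun g : G => ltrans g (ψ (g⁻¹ • x)) := by
  have h : Measurable fun g : G => (g, x) := measurable_id.prodMk measurable_const
  exact (measurable_ltrans_param hψ.1 hψ.2).comp h

lemma isSystem_sconv {φ ψ : X → Measure G} (hφ : IsSystem φ) (hψ : IsSystem ψ) :
    IsSystem (sconv φ ψ) := by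
  constructor
  · refine Measure.measurable_of_measurable_coe _ fun s hs => ?_
    have heq : ∀ x, sconv φ ψ x s = ∫⁻ g, (ltrans g (ψ (g⁻¹ • x))) s ∂φ x := fun x =>
      Measure.bind_apply hs (measurable_bindF hψ x).aemeasurable
    simp_rw [heq]
    let κ : Kernel X G := ⟨φ, hφ.1⟩
    haveI : IsMarkovKernel κ := ⟨hφ.2⟩
    have hf : Measurable fun q : X × G => (ltrans q.2 (ψ (q.2⁻¹ • q.1))) s := by
      have h2 : Measurable fun q : X × G => (q.2, q.1) := measurable_snd.prodMk measurable_fst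
      exact (Measure.measurable_coe hs).comp ((measurable_ltrans_param hψ.1 hψ.2).comp h2)
    exact Measurable.lintegral_kernel_prod_right' (κ := κ) hf
  · intro x
    haveI := hφ.2 x
    refine isProbabilityMeasure_bind (measurable_bindF hψ x) fun g => ?_
    haveI := hψ.2 (g⁻¹ • x); exact isProbabilityMeasure_ltrans g

lemma ltrans_ltrans (g h : G) (ρ : Measure G) : ltrans g (ltrans h ρ) = ltrans (g * h) ρ := by
  rw [ltrans, ltrans, ltrans,
    Measure.map_map (measurable_const_mul g) (measurable_const_mul h)]
  congr 1
  funext k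
  simp [mul_assoc]

lemma ltrans_bind {μ : Measure G} {F : G → Measure G} (hF : Measurable F) (g : G) :
    ltrans g (μ.bind F) = μ.bind fun h => ltrans g (F h) := by
  have hmapF : Measurable fun h => ltrans g (F h) :=
    (Measure.measurable_map _ (measurable_const_mul g)).comp hF
  ext s hs
  rw [ltrans, Measure.map_apply (measurable_const_mul g) hs,
    Measure.bind_apply ((measurable_const_mul g) hs) hF.aemeasurable, Measure.bind_apply hs hmapF.aemeasurable]
  refine lintegral_congr fun h => ?_
  rw [ltrans, Measure.map_apply (measurable_const_mul g) hs]

lemma ltrans_sconv {φ ψ : X → Measure G} (hψ : IsSystem ψ) (g : G) (x : X) :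
    ltrans g (sconv φ ψ (g⁻¹ • x))
      = (φ (g⁻¹ • x)).bind fun h => ltrans (g * h) (ψ ((g * h)⁻¹ • x)) := by
  have : sconv φ ψ (g⁻¹ • x) = (φ (g⁻¹ • x)).bind fun h => ltrans h (ψ (h⁻¹ • (g⁻¹ • x))) := rfl
  rw [this, ltrans_bind (measurable_bindF hψ (g⁻¹ • x)) g]
  congr 1
  funext h
  rw [ltrans_ltrans]
  congr 2
  rw [mul_inv_rev, mul_smul]

end GX

section Main
set_option linter.unusedSectionVars false
open MeasurableSpace ProbabilityTheory
variable {G X : Type*} [MeasurableSpace G] [MeasurableSpace X] [Group G] [MulAction G X]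
  [MeasurableSMul₂ G X] [MeasurableMul₂ G] [MeasurableInv G]
  {φ ψ : X → Measure G} {m : Measure (G × X)}

lemma measurable_kQ (hφ : IsSystem φ) :
    Measurable fun p : G × X => (φ (p.1⁻¹ • p.2)).map fun h => (p.1 * h, p.2) := by
  have hρ : Measurable fun p : G × X => φ (p.1⁻¹ • p.2) :=
    hφ.1.comp (measurable_fst.inv.smul measurable_snd)
  exact measurable_map_param hρ (fun p => hφ.2 _)
    (f := fun q : (G × X) × G => (q.1.1 * q.2, q.1.2))
    ((measurable_fst.fst.mul measurable_snd).prodMk measurable_fst.snd)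

lemma measurable_kbarQ (hφ : IsSystem φ) :
    Measurable fun p : G × X => (φ p.2).map fun h => (h, p.2) := by
  have hρ : Measurable fun p : G × X => φ p.2 := hφ.1.comp measurable_snd
  exact measurable_map_param hρ (fun p => hφ.2 _)
    (f := fun q : (G × X) × G => (q.2, q.1.2))
    (measurable_snd.prodMk measurable_fst.snd)

lemma kQ_prob (hφ : IsSystem φ) (p : G × X) :
    IsProbabilityMeasure ((φ (p.1⁻¹ • p.2)).map fun h => (p.1 * h, p.2)) := by
  haveI := hφ.2 (p.1⁻¹ • p.2)
  exact Measure.isProbabilityMeasure_map (((measurable_const_mul p.1).prodMk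
    measurable_const).aemeasurable)

lemma kbarQ_prob (hφ : IsSystem φ) (p : G × X) :
    IsProbabilityMeasure ((φ p.2).map fun h => (h, p.2)) := by
  haveI := hφ.2 p.2
  exact Measure.isProbabilityMeasure_map ((measurable_id.prodMk measurable_const).aemeasurable)

lemma mQ_prob [IsProbabilityMeasure m] (hφ : IsSystem φ) : IsProbabilityMeasure (mQ m φ) :=
  isProbabilityMeasure_bind (measurable_kQ hφ) (kQ_prob hφ)

lemma mbarQ_prob [IsProbabilityMeasure m] (hφ : IsSystem φ) :
    IsProbabilityMeasure (mbarQ m φ) :=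
  isProbabilityMeasure_bind (measurable_kbarQ hφ) (kbarQ_prob hφ)

lemma mQ_ac {lam : Measure G} [SigmaFinite lam] [lam.IsMulLeftInvariant] {κm : Measure X}
    [SigmaFinite κm] (hm : m ≪ lam.prod κm) (hφ : IsSystem φ) (hφac : ∀ x, φ x ≪ lam) :
    mQ m φ ≪ lam.prod κm := by
  refine Measure.AbsolutelyContinuous.mk fun S hS h0 => ?_
  have h0' : (κm.prod lam) (Prod.swap ⁻¹' S) = 0 := by
    rw [← Measure.prod_swap] at h0
    rwa [Measure.map_apply measurable_swap hS] at h0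
  have hsec : (fun x => lam (Prod.mk x ⁻¹' (Prod.swap ⁻¹' S))) =ᵐ[κm] 0 :=
    (Measure.measure_prod_null (measurable_swap hS)).1 h0'
  have hN : κm {x | lam {k | (k, x) ∈ S} ≠ 0} = 0 := by
    have := hsec
    rw [Filter.EventuallyEq, Filter.eventually_iff, mem_ae_iff] at this
    exact (by simpa [Set.compl_setOf] using this :
      κm {a | ¬lam (Prod.mk a ⁻¹' (Prod.swap ⁻¹' S)) = 0} = 0)
  set N := {x | lam {k | (k, x) ∈ S} ≠ 0} with hNdef
  have hBnull : (lam.prod κm) {p : G × X | p.2 ∈ N} = 0 := by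
    refine measure_mono_null (fun p hp => ?_) (?_ : (lam.prod κm)
      (Set.univ ×ˢ toMeasurable κm N) = 0)
    · exact ⟨Set.mem_univ _, subset_toMeasurable κm N hp⟩
    · rw [Measure.prod_prod, measure_toMeasurable, hN, mul_zero]
  have hmB : m {p : G × X | p.2 ∈ N} = 0 := hm hBnull
  rw [mQ, Measure.bind_apply hS (measurable_kQ hφ).aemeasurable]
  have hae : ∀ᵐ p ∂m, ((φ (p.1⁻¹ • p.2)).map fun h => (p.1 * h, p.2)) S = 0 := by
    rw [Filter.eventually_iff, mem_ae_iff]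
    refine measure_mono_null (fun p hp => ?_) hmB
    simp only [Set.mem_compl_iff, Set.mem_setOf_eq] at hp
    simp only [Set.mem_setOf_eq, hNdef]
    intro hlam0
    apply hp
    rw [Measure.map_apply (show Measurable fun h : G => (p.1 * h, p.2) from
      (measurable_const_mul p.1).prodMk measurable_const) hS]
    refine (hφac (p.1⁻¹ • p.2)) ?_
    have heq : (fun h => (p.1 * h, p.2)) ⁻¹' S
        = (fun h => p.1 * h) ⁻¹' {k | (k, p.2) ∈ S} := rfl
    rw [heq, measure_preimage_mul]
    exact hlam0
  calc ∫⁻ p, ((φ (p.1⁻¹ • p.2)).map fun h => (p.1 * h, p.2)) S ∂m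
      = ∫⁻ _, 0 ∂m := lintegral_congr_ae hae
    _ = 0 := lintegral_zero

lemma mbarQ_ac {lam : Measure G} [SigmaFinite lam] {κm : Measure X}
    [SigmaFinite κm] (hm : m ≪ lam.prod κm) (hφ : IsSystem φ) (hφac : ∀ x, φ x ≪ lam) :
    mbarQ m φ ≪ lam.prod κm := by
  refine Measure.AbsolutelyContinuous.mk fun S hS h0 => ?_
  have h0' : (κm.prod lam) (Prod.swap ⁻¹' S) = 0 := by
    rw [← Measure.prod_swap] at h0
    rwa [Measure.map_apply measurable_swap hS] at h0
  have hsec : (fun x => lam (Prod.mk x ⁻¹' (Prod.swap ⁻¹' S))) =ᵐ[κm] 0 :=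
    (Measure.measure_prod_null (measurable_swap hS)).1 h0'
  have hN : κm {x | lam {k | (k, x) ∈ S} ≠ 0} = 0 := by
    have := hsec
    rw [Filter.EventuallyEq, Filter.eventually_iff, mem_ae_iff] at this
    exact (by simpa [Set.compl_setOf] using this :
      κm {a | ¬lam (Prod.mk a ⁻¹' (Prod.swap ⁻¹' S)) = 0} = 0)
  set N := {x | lam {k | (k, x) ∈ S} ≠ 0} with hNdef
  have hBnull : (lam.prod κm) {p : G × X | p.2 ∈ N} = 0 := by
    refine measure_mono_null (fun p hp => ?_) (?_ : (lam.prod κm)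
      (Set.univ ×ˢ toMeasurable κm N) = 0)
    · exact ⟨Set.mem_univ _, subset_toMeasurable κm N hp⟩
    · rw [Measure.prod_prod, measure_toMeasurable, hN, mul_zero]
  have hmB : m {p : G × X | p.2 ∈ N} = 0 := hm hBnull
  rw [mbarQ, Measure.bind_apply hS (measurable_kbarQ hφ).aemeasurable]
  have hae : ∀ᵐ p ∂m, ((φ p.2).map fun h => (h, p.2)) S = 0 := by
    rw [Filter.eventually_iff, mem_ae_iff]
    refine measure_mono_null (fun p hp => ?_) hmB
    simp only [Set.mem_compl_iff, Set.mem_setOf_eq] at hp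
    simp only [Set.mem_setOf_eq, hNdef]
    intro hlam0
    apply hp
    rw [Measure.map_apply (show Measurable fun h : G => (h, p.2) from
      measurable_id.prodMk measurable_const) hS]
    refine (hφac p.2) ?_
    have heq : (fun h : G => (h, p.2)) ⁻¹' S = {k | (k, p.2) ∈ S} := rfl
    rw [heq]
    exact hlam0
  calc ∫⁻ p, ((φ p.2).map fun h => (h, p.2)) S ∂m
      = ∫⁻ _, 0 ∂m := lintegral_congr_ae hae
    _ = 0 := lintegral_zero

end Main

section Main2
set_option linter.unusedSectionVars false
open MeasurableSpace ProbabilityTheory ENNReal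
variable {G X : Type*} [MeasurableSpace G] [MeasurableSpace X] [Group G] [MulAction G X]
  [MeasurableSMul₂ G X] [MeasurableMul₂ G] [MeasurableInv G]
  {φ ψ : X → Measure G} {m : Measure (G × X)}

lemma dsys_sconv_le [CountablyGenerated G] (hφ : IsSystem φ) (hψ : IsSystem ψ) (p : G × X) :
    Dsys (sconv φ ψ) p ≤ (∫ h, Dsys ψ (p.1 * h, p.2) ∂(φ (p.1⁻¹ • p.2)))
      + ∫ h, Dsys ψ (h, p.2) ∂(φ p.2) := by
  obtain ⟨g, x⟩ := p
  haveI := hφ.2 (g⁻¹ • x); haveI := hφ.2 x; haveI := hψ.2 x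
  haveI := (isSystem_sconv hφ hψ).2 (g⁻¹ • x); haveI := (isSystem_sconv hφ hψ).2 x
  haveI : IsProbabilityMeasure (ltrans g (sconv φ ψ (g⁻¹ • x))) := isProbabilityMeasure_ltrans g
  have h1 : tv (ltrans g (sconv φ ψ (g⁻¹ • x))) (ψ x)
      ≤ ∫ h, Dsys ψ ((g, x).1 * h, (g, x).2) ∂(φ ((g, x).1⁻¹ • (g, x).2)) := by
    rw [ltrans_sconv hψ g x]
    have hfm : Measurable fun h : G => ltrans (g * h) (ψ ((g * h)⁻¹ • x)) :=
      (measurable_bindF hψ x).comp (measurable_const_mul g)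
    have hfp : ∀ h, IsProbabilityMeasure (ltrans (g * h) (ψ ((g * h)⁻¹ • x))) := fun h => by
      haveI := hψ.2 ((g * h)⁻¹ • x); exact isProbabilityMeasure_ltrans _
    exact tv_bind_le_const hfm hfp
  have h2 : tv (ψ x) (sconv φ ψ x) ≤ ∫ h, Dsys ψ (h, (g, x).2) ∂(φ (g, x).2) := by
    rw [tv_comm]
    have heq : sconv φ ψ x = (φ x).bind fun h => ltrans h (ψ (h⁻¹ • x)) := rfl
    rw [heq]
    exact tv_bind_le_const (measurable_bindF hψ x) fun h => by
      haveI := hψ.2 (h⁻¹ • x); exact isProbabilityMeasure_ltrans _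
  refine le_trans ?_ (add_le_add h1 h2)
  exact tv_triangle _ (ψ x) _

lemma sdisc_sconv_le [CountablyGenerated G] (hφ : IsSystem φ) (hψ : IsSystem ψ)
    [IsProbabilityMeasure m] :
    sdisc m (sconv φ ψ) ≤ sdisc (mQ m φ) ψ + sdisc (mbarQ m φ) ψ := by
  have Dm : Measurable (Dsys ψ) := measurable_dsys hψ
  set N₁ : G × X → ℝ≥0∞ :=
    fun p => ∫⁻ h, ENNReal.ofReal (Dsys ψ (p.1 * h, p.2)) ∂(φ (p.1⁻¹ • p.2)) with hN₁def
  set N₂ : G × X → ℝ≥0∞ :=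
    fun p => ∫⁻ h, ENNReal.ofReal (Dsys ψ (h, p.2)) ∂(φ p.2) with hN₂def
  have hmint1 : Measurable fun q : (G × X) × G => ENNReal.ofReal (Dsys ψ (q.1.1 * q.2, q.1.2)) :=
    ENNReal.measurable_ofReal.comp (Dm.comp
      ((measurable_fst.fst.mul measurable_snd).prodMk measurable_fst.snd))
  have hmint2 : Measurable fun q : (G × X) × G => ENNReal.ofReal (Dsys ψ (q.2, q.1.2)) :=
    ENNReal.measurable_ofReal.comp (Dm.comp (measurable_snd.prodMk measurable_fst.snd))
  let κ1 : Kernel (G × X) G := ⟨fun p => φ (p.1⁻¹ • p.2),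
    hφ.1.comp (measurable_fst.inv.smul measurable_snd)⟩
  haveI : IsMarkovKernel κ1 := ⟨fun p => hφ.2 _⟩
  let κ2 : Kernel (G × X) G := ⟨fun p => φ p.2, hφ.1.comp measurable_snd⟩
  haveI : IsMarkovKernel κ2 := ⟨fun p => hφ.2 _⟩
  have hN₁m : Measurable N₁ := Measurable.lintegral_kernel_prod_right' (κ := κ1) hmint1
  have hN₂m : Measurable N₂ := Measurable.lintegral_kernel_prod_right' (κ := κ2) hmint2
  have hofD : ∀ y : G × X, ENNReal.ofReal (Dsys ψ y) ≤ 2 := fun y => by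
    calc ENNReal.ofReal (Dsys ψ y) ≤ ENNReal.ofReal 2 :=
          ENNReal.ofReal_le_ofReal (dsys_le_two hψ.2 y)
      _ = 2 := by norm_num
  have hb1 : ∀ p, N₁ p ≤ 2 := fun p => by
    haveI := hφ.2 (p.1⁻¹ • p.2)
    calc N₁ p ≤ ∫⁻ _, 2 ∂(φ (p.1⁻¹ • p.2)) := lintegral_mono fun h => hofD _
      _ = 2 := by simp
  have hb2 : ∀ p, N₂ p ≤ 2 := fun p => by
    haveI := hφ.2 p.2
    calc N₂ p ≤ ∫⁻ _, 2 ∂(φ p.2) := lintegral_mono fun h => hofD _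
      _ = 2 := by simp
  have hG1 : ∀ p : G × X, ∫ h, Dsys ψ (p.1 * h, p.2) ∂(φ (p.1⁻¹ • p.2)) = (N₁ p).toReal := by
    intro p
    rw [integral_eq_lintegral_of_nonneg_ae (Filter.Eventually.of_forall fun h => dsys_nonneg _)
      ((Dm.comp ((measurable_const_mul p.1).prodMk measurable_const)).aestronglyMeasurable)]
  have hG2 : ∀ p : G × X, ∫ h, Dsys ψ (h, p.2) ∂(φ p.2) = (N₂ p).toReal := by
    intro p
    rw [integral_eq_lintegral_of_nonneg_ae (Filter.Eventually.of_forall fun h => dsys_nonneg _)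
      (show AEStronglyMeasurable (fun h : G => Dsys ψ (h, p.2)) (φ p.2) from
        (Dm.comp (measurable_id.prodMk measurable_const)).aestronglyMeasurable)]
  have hpt : ∀ p, Dsys (sconv φ ψ) p ≤ (N₁ p).toReal + (N₂ p).toReal := fun p => by
    rw [← hG1 p, ← hG2 p]; exact dsys_sconv_le hφ hψ p
  have hDconv : Measurable (Dsys (sconv φ ψ)) := measurable_dsys (isSystem_sconv hφ hψ)
  have intD : Integrable (Dsys (sconv φ ψ)) m := by
    refine integrable_of_bounded hDconv.aestronglyMeasurable (C := 2) fun p => ?_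
    rw [Real.norm_eq_abs, abs_of_nonneg (dsys_nonneg p)]
    exact dsys_le_two (isSystem_sconv hφ hψ).2 p
  have toRealbdd : ∀ (N : G × X → ℝ≥0∞), (∀ p, N p ≤ 2) → ∀ p, ‖(N p).toReal‖ ≤ 2 := by
    intro N hN p
    rw [Real.norm_eq_abs, abs_of_nonneg ENNReal.toReal_nonneg]
    calc (N p).toReal ≤ (2 : ℝ≥0∞).toReal :=
          ENNReal.toReal_le_toReal (ne_top_of_le_ne_top (by norm_num) (hN p)) (by norm_num)
            |>.2 (hN p)
      _ = 2 := by norm_num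
  have int1 : Integrable (fun p => (N₁ p).toReal) m :=
    integrable_of_bounded (ENNReal.measurable_toReal.comp hN₁m).aestronglyMeasurable
      (toRealbdd N₁ hb1)
  have int2 : Integrable (fun p => (N₂ p).toReal) m :=
    integrable_of_bounded (ENNReal.measurable_toReal.comp hN₂m).aestronglyMeasurable
      (toRealbdd N₂ hb2)
  have step1 : sdisc m (sconv φ ψ) ≤ ∫ p, ((N₁ p).toReal + (N₂ p).toReal) ∂m :=
    integral_mono intD (int1.add int2) hpt
  rw [integral_add int1 int2] at step1
  have key1 : ∫ p, (N₁ p).toReal ∂m = sdisc (mQ m φ) ψ := by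
    rw [integral_toReal hN₁m.aemeasurable (Filter.Eventually.of_forall fun p =>
      lt_of_le_of_lt (hb1 p) (by norm_num))]
    rw [sdisc, integral_eq_lintegral_of_nonneg_ae
      (Filter.Eventually.of_forall fun p => dsys_nonneg p) Dm.aestronglyMeasurable]
    congr 1
    rw [mQ, Measure.lintegral_bind (measurable_kQ hφ).aemeasurable (show Measurable fun y : G × X => ENNReal.ofReal (Dsys ψ y) from ENNReal.measurable_ofReal.comp Dm).aemeasurable]
    refine lintegral_congr fun p => ?_
    rw [lintegral_map (show Measurable fun y : G × X => ENNReal.ofReal (Dsys ψ y) from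
      ENNReal.measurable_ofReal.comp Dm)
      ((measurable_const_mul p.1).prodMk measurable_const)]
  have key2 : ∫ p, (N₂ p).toReal ∂m = sdisc (mbarQ m φ) ψ := by
    rw [integral_toReal hN₂m.aemeasurable (Filter.Eventually.of_forall fun p =>
      lt_of_le_of_lt (hb2 p) (by norm_num))]
    rw [sdisc, integral_eq_lintegral_of_nonneg_ae
      (Filter.Eventually.of_forall fun p => dsys_nonneg p) Dm.aestronglyMeasurable]
    congr 1
    rw [mbarQ, Measure.lintegral_bind (measurable_kbarQ hφ).aemeasurable (show Measurable fun y : G × X => ENNReal.ofReal (Dsys ψ y) from ENNReal.measurable_ofReal.comp Dm).aemeasurable]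
    refine lintegral_congr fun p => ?_
    rw [lintegral_map (show Measurable fun y : G × X => ENNReal.ofReal (Dsys ψ y) from
      ENNReal.measurable_ofReal.comp Dm)
      (show Measurable fun h : G => (h, p.2) from measurable_id.prodMk measurable_const)]
  rw [key1, key2] at step1
  exact step1

end Main2


/-- If `(θ_n)` are systems with `Δ(m, θ_n) → 0` for every probability
measure `m ≺ λ ⊗ κ`, and `φ` is an absolutely continuous system, then
`Δ(m, φ⊛θ_n) → 0` for every probability measure `m ≺ λ ⊗ κ`. -/
theorem stmt13 {G X : Type*} [TopologicalSpace G] [Group G] [IsTopologicalGroup G]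
    [LocallyCompactSpace G] [SecondCountableTopology G] [MeasurableSpace G] [BorelSpace G]
    [MeasurableSpace X] [StandardBorelSpace X] [MulAction G X] [MeasurableSMul₂ G X]
    (lam : Measure G) (hlam : lam.IsHaarMeasure)
    (κ : Measure X) (hκ : SigmaFinite κ)
    (θ : ℕ → X → Measure G) (hθ : ∀ n, IsSystem (θ n))
    (hISAI : ∀ m : Measure (G × X), IsProbabilityMeasure m → m ≪ lam.prod κ →
      Tendsto (fun n => sdisc m (θ n)) atTop (nhds 0))
    (φ : X → Measure G) (hφ : IsSystem φ) (hφac : ∀ x, φ x ≪ lam) :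
    ∀ m : Measure (G × X), IsProbabilityMeasure m → m ≪ lam.prod κ →
      Tendsto (fun n => sdisc m (sconv φ (θ n))) atTop (nhds 0) := by
  intro m hm hmac
  haveI := hm
  haveI := hκ
  haveI := hlam
  haveI : lam.IsMulLeftInvariant := hlam.toIsMulLeftInvariant
  haveI : SigmaFinite lam := inferInstance
  haveI : IsProbabilityMeasure (mQ m φ) := mQ_prob hφ
  haveI : IsProbabilityMeasure (mbarQ m φ) := mbarQ_prob hφ
  have h1 := hISAI (mQ m φ) inferInstance (mQ_ac hmac hφ hφac)
  have h2 := hISAI (mbarQ m φ) inferInstance (mbarQ_ac hmac hφ hφac)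
  have hsum := h1.add h2
  rw [add_zero] at hsum
  refine squeeze_zero (fun n => ?_) (fun n => sdisc_sconv_le hφ (hθ n)) hsum
  exact integral_nonneg fun p => dsys_nonneg p
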